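/- Let k be a field and f, g ∈ k[Y] monic polynomials with g irreducible. Then the polynomial h(T) = (-1)^(deg g) · Res_Y(g(Y), f(Y) - T) ∈ k[T] is a power of some irreducible polynomial in k[T]. -/

import Mathlib

open Polynomial

/-- The resultant of two polynomials, defined as the determinant of the Sylvester
matrix: the first `g.natDegree` rows contain the shifted coefficient sequences of `f`,
the remaining `f.natDegree` rows the shifted coefficient sequences of `g`. -/
noncomputable def resultant {R : Type*} [CommRing R] (f g : R[X]) : R :=
  Matrix.det (Matrix.of fun (i j : Fin (f.natDegree + g.natDegree)) =>
    if (i : ℕ) < g.natDegree then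
      if (i : ℕ) ≤ (j : ℕ) ∧ (j : ℕ) ≤ (i : ℕ) + f.natDegree then
        f.coeff (f.natDegree + i - j) else 0
    else
      if (i : ℕ) - g.natDegree ≤ (j : ℕ) ∧ (j : ℕ) ≤ (i : ℕ) - g.natDegree + g.natDegree then
        g.coeff (g.natDegree + ((i : ℕ) - g.natDegree) - (j : ℕ)) else 0)

namespace ResAux

variable {R : Type*} [CommRing R]

/-- The Sylvester matrix underlying `resultant`. -/
noncomputable def syl (f g : R[X]) :
    Matrix (Fin (f.natDegree + g.natDegree)) (Fin (f.natDegree + g.natDegree)) R :=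
  Matrix.of fun (i j : Fin (f.natDegree + g.natDegree)) =>
    if (i : ℕ) < g.natDegree then
      if (i : ℕ) ≤ (j : ℕ) ∧ (j : ℕ) ≤ (i : ℕ) + f.natDegree then
        f.coeff (f.natDegree + i - j) else 0
    else
      if (i : ℕ) - g.natDegree ≤ (j : ℕ) ∧ (j : ℕ) ≤ (i : ℕ) - g.natDegree + g.natDegree then
        g.coeff (g.natDegree + ((i : ℕ) - g.natDegree) - (j : ℕ)) else 0

lemma resultant_eq_det (f g : R[X]) : _root_.resultant f g = (syl f g).det := rfl

lemma term_eq (p : R[X]) (N S i j : ℕ) (hi : i < N) (hj : j < S) (hS : S = p.natDegree + N) :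
    (if i ≤ j ∧ j ≤ i + p.natDegree then p.coeff (p.natDegree + i - j) else 0)
      = (if N - 1 - i ≤ S - 1 - j then p.coeff (S - 1 - j - (N - 1 - i)) else 0) := by
  subst hS
  split_ifs with h1 h2 h2
  · congr 1; omega
  · exfalso; omega
  · exact (Polynomial.coeff_eq_zero_of_natDegree_lt (by omega)).symm
  · rfl

lemma coeff_term (p : R[X]) (x : R) (e d : ℕ) :
    (C x * X ^ e * p).coeff d = x * (if e ≤ d then p.coeff (d - e) else 0) := by
  rw [mul_right_comm, Polynomial.coeff_mul_X_pow']
  split_ifs <;> simp [coeff_C_mul]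

lemma vecMul_syl (a b : R[X]) (c : Fin (a.natDegree + b.natDegree) → R)
    (j : Fin (a.natDegree + b.natDegree)) :
    Matrix.vecMul c (syl a b) j
      = ((∑ i : Fin b.natDegree,
            C (c ⟨(i : ℕ), by have := i.isLt; omega⟩) * X ^ (b.natDegree - 1 - (i : ℕ))) * a
        + (∑ i : Fin a.natDegree,
            C (c ⟨b.natDegree + (i : ℕ), by have := i.isLt; omega⟩) * X ^ (a.natDegree - 1 - (i : ℕ))) * b).coeff
          (a.natDegree + b.natDegree - 1 - (j : ℕ)) := by
  classical
  let e : Fin b.natDegree ⊕ Fin a.natDegree ≃ Fin (a.natDegree + b.natDegree) :=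
    finSumFinEquiv.trans (finCongr (Nat.add_comm b.natDegree a.natDegree))
  have e_inl : ∀ i : Fin b.natDegree, ((e (Sum.inl i)) : ℕ) = (i : ℕ) := by
    intro i; simp [e]
  have e_inr : ∀ i : Fin a.natDegree, ((e (Sum.inr i)) : ℕ) = b.natDegree + (i : ℕ) := by
    intro i; simp [e]; omega
  have lhs : Matrix.vecMul c (syl a b) j
      = ∑ i : Fin (a.natDegree + b.natDegree), c i * syl a b i j := by
    simp [Matrix.vecMul, dotProduct]
  rw [lhs, Polynomial.coeff_add, Finset.sum_mul, Finset.sum_mul,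
    Polynomial.finset_sum_coeff, Polynomial.finset_sum_coeff]
  have split : ∑ i : Fin (a.natDegree + b.natDegree), c i * syl a b i j
      = (∑ i : Fin b.natDegree, c (e (Sum.inl i)) * syl a b (e (Sum.inl i)) j)
        + ∑ i : Fin a.natDegree, c (e (Sum.inr i)) * syl a b (e (Sum.inr i)) j := by
    rw [← Fintype.sum_sum_type
      (fun x : Fin b.natDegree ⊕ Fin a.natDegree => c (e x) * syl a b (e x) j)]
    exact (Fintype.sum_equiv e (fun x => c (e x) * syl a b (e x) j)
      (fun i => c i * syl a b i j) (fun x => rfl)).symm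
  rw [split]
  congr 1
  · refine Finset.sum_congr rfl fun i _ => ?_
    rw [ResAux.coeff_term]
    congr 1
    have hrow : syl a b (e (Sum.inl i)) j
        = if (i : ℕ) ≤ (j : ℕ) ∧ (j : ℕ) ≤ (i : ℕ) + a.natDegree
          then a.coeff (a.natDegree + (i : ℕ) - (j : ℕ)) else 0 := by
      show (if ((e (Sum.inl i)) : ℕ) < b.natDegree then _ else _) = _
      rw [e_inl i, if_pos i.isLt]
    rw [hrow]
    exact ResAux.term_eq a b.natDegree (a.natDegree + b.natDegree) (i : ℕ) (j : ℕ)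
      i.isLt j.isLt rfl
  · refine Finset.sum_congr rfl fun i _ => ?_
    rw [ResAux.coeff_term]
    congr 1
    have hrow : syl a b (e (Sum.inr i)) j
        = if (i : ℕ) ≤ (j : ℕ) ∧ (j : ℕ) ≤ (i : ℕ) + b.natDegree
          then b.coeff (b.natDegree + (i : ℕ) - (j : ℕ)) else 0 := by
      show (if ((e (Sum.inr i)) : ℕ) < b.natDegree then _ else _) = _
      rw [e_inr i, if_neg (by omega)]
      rw [show b.natDegree + (i : ℕ) - b.natDegree = (i : ℕ) by omega]
    rw [hrow]
    exact ResAux.term_eq b a.natDegree (a.natDegree + b.natDegree) (i : ℕ) (j : ℕ)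
      i.isLt j.isLt (by omega)

lemma recon (p : R[X]) (N : ℕ) (h : p.natDegree < N) :
    (∑ i : Fin N, C (p.coeff (N - 1 - (i : ℕ))) * X ^ (N - 1 - (i : ℕ))) = p := by
  conv_rhs => rw [p.as_sum_range' N h]
  rw [Fin.sum_univ_eq_sum_range (fun i => C (p.coeff (N - 1 - i)) * X ^ (N - 1 - i))]
  refine Finset.sum_nbij' (fun i => N - 1 - i) (fun i => N - 1 - i) ?_ ?_ ?_ ?_ ?_ <;>
    intro i hi <;> simp only [Finset.mem_range] at * <;> try omega
  rw [C_mul_X_pow_eq_monomial]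

lemma natDegree_uv_le {N : ℕ} (w : Fin N → R) :
    (∑ i : Fin N, C (w i) * X ^ (N - 1 - (i : ℕ))).natDegree ≤ N - 1 := by
  refine Polynomial.natDegree_sum_le_of_forall_le _ _ fun i _ => ?_
  refine (Polynomial.natDegree_mul_le).trans ?_
  have h2 : (X ^ (N - 1 - (i : ℕ)) : R[X]).natDegree ≤ N - 1 - (i : ℕ) :=
    Polynomial.natDegree_X_pow_le _
  have h3 : (C (w i)).natDegree = 0 := Polynomial.natDegree_C _
  omega

lemma coeff_uv {N : ℕ} (w : Fin N → R) (i : Fin N) :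
    (∑ i' : Fin N, C (w i') * X ^ (N - 1 - (i' : ℕ))).coeff (N - 1 - (i : ℕ)) = w i := by
  rw [Polynomial.finset_sum_coeff]
  rw [Finset.sum_eq_single i]
  · simp [coeff_C_mul, Polynomial.coeff_X_pow]
  · intro i' _ hne
    have h1 : ¬ (N - 1 - (i : ℕ) = N - 1 - (i' : ℕ)) := by
      have := i.isLt; have := i'.isLt
      intro hcon; exact hne (Fin.ext (by omega))
    simp [coeff_C_mul, Polynomial.coeff_X_pow, h1]
  · intro hcon; exact absurd (Finset.mem_univ i) hcon

lemma resultant_eq_zero_iff {F : Type*} [Field F] {a b : F[X]} (ha : a.Monic) (hb : b ≠ 0) :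
    _root_.resultant a b = 0 ↔ ¬ IsCoprime a b := by
  classical
  have ha0 : a ≠ 0 := ha.ne_zero
  rw [resultant_eq_det, ← Matrix.exists_vecMul_eq_zero_iff]
  constructor
  · rintro ⟨c, hc0, hc⟩ hcop
    set u : F[X] := ∑ i : Fin b.natDegree,
      C (c ⟨(i : ℕ), by have := i.isLt; omega⟩) * X ^ (b.natDegree - 1 - (i : ℕ)) with hu
    set v : F[X] := ∑ i : Fin a.natDegree,
      C (c ⟨b.natDegree + (i : ℕ), by have := i.isLt; omega⟩)
        * X ^ (a.natDegree - 1 - (i : ℕ)) with hv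
    have hudeg : u.natDegree ≤ b.natDegree - 1 := by rw [hu]; exact natDegree_uv_le _
    have hvdeg : v.natDegree ≤ a.natDegree - 1 := by rw [hv]; exact natDegree_uv_le _
    have hsum : u * a + v * b = 0 := by
      apply Polynomial.ext; intro dd
      rw [Polynomial.coeff_zero]
      rcases lt_or_ge dd (a.natDegree + b.natDegree) with hd | hd
      · have hvv := vecMul_syl a b c ⟨a.natDegree + b.natDegree - 1 - dd, by omega⟩
        rw [hc] at hvv
        simp only [Pi.zero_apply] at hvv
        rw [← hu, ← hv] at hvv
        rw [show a.natDegree + b.natDegree - 1 - (a.natDegree + b.natDegree - 1 - dd) = dd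
            from by omega] at hvv
        exact hvv.symm
      · have h1 : (u * a).coeff dd = 0 := by
          rcases Nat.eq_zero_or_pos b.natDegree with h0 | h0
          · have hu0 : u = 0 := by
              rw [hu]
              haveI : IsEmpty (Fin b.natDegree) := by rw [h0]; infer_instance
              simp
            simp [hu0]
          · apply Polynomial.coeff_eq_zero_of_natDegree_lt
            have := Polynomial.natDegree_mul_le (p := u) (q := a)
            omega
        have h2 : (v * b).coeff dd = 0 := by
          rcases Nat.eq_zero_or_pos a.natDegree with h0 | h0
          · have hv0 : v = 0 := by
              rw [hv]
              haveI : IsEmpty (Fin a.natDegree) := by rw [h0]; infer_instance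
              simp
            simp [hv0]
          · apply Polynomial.coeff_eq_zero_of_natDegree_lt
            have := Polynomial.natDegree_mul_le (p := v) (q := b)
            omega
        rw [Polynomial.coeff_add, h1, h2, add_zero]
    have hba : b ∣ u := by
      have hdvd : b ∣ u * a := ⟨-v, by linear_combination hsum⟩
      exact (hcop.symm).dvd_of_dvd_mul_right hdvd
    have hu0 : u = 0 := by
      rcases Nat.eq_zero_or_pos b.natDegree with h0 | h0
      · rw [hu]
        haveI : IsEmpty (Fin b.natDegree) := by rw [h0]; infer_instance
        simp
      · by_contra hne
        have h1 := Polynomial.natDegree_le_of_dvd hba hne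
        omega
    have hv0 : v = 0 := by
      rw [hu0, zero_mul, zero_add] at hsum
      rcases mul_eq_zero.mp hsum with h | h
      · exact h
      · exact absurd h hb
    apply hc0
    funext i0
    simp only [Pi.zero_apply]
    rcases lt_or_ge (i0 : ℕ) b.natDegree with hlt | hge
    · have hco := coeff_uv
        (fun i : Fin b.natDegree => c ⟨(i : ℕ), by have := i.isLt; omega⟩) ⟨(i0 : ℕ), hlt⟩
      rw [← hu, hu0] at hco
      simp only [Polynomial.coeff_zero] at hco
      exact hco.symm
    · have := i0.isLt
      have hco := coeff_uv
        (fun i : Fin a.natDegree => c ⟨b.natDegree + (i : ℕ), by have := i.isLt; omega⟩)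
        ⟨(i0 : ℕ) - b.natDegree, by omega⟩
      rw [← hv, hv0] at hco
      simp only [Polynomial.coeff_zero] at hco
      rw [show i0 = ⟨b.natDegree + ((i0 : ℕ) - b.natDegree), by omega⟩ from
        Fin.ext (by simp; omega)]
      exact hco.symm
  · intro hncop
    have hdu : ¬ IsUnit (EuclideanDomain.gcd a b) := fun h =>
      hncop (EuclideanDomain.gcd_isUnit_iff.mp h)
    obtain ⟨a', ha'⟩ : EuclideanDomain.gcd a b ∣ a := EuclideanDomain.gcd_dvd_left a b
    obtain ⟨b', hb'⟩ : EuclideanDomain.gcd a b ∣ b := EuclideanDomain.gcd_dvd_right a b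
    have hd0 : EuclideanDomain.gcd a b ≠ 0 := fun h => ha0 (by rw [ha', h, zero_mul])
    have hddeg : 1 ≤ (EuclideanDomain.gcd a b).natDegree := by
      by_contra hcon
      push_neg at hcon
      apply hdu
      apply Polynomial.isUnit_iff_degree_eq_zero.mpr
      rw [Polynomial.degree_eq_natDegree hd0]
      norm_cast
      omega
    have hb'0 : b' ≠ 0 := fun h => hb (by rw [hb', h, mul_zero])
    have ha'0 : a' ≠ 0 := fun h => ha0 (by rw [ha', h, mul_zero])
    have hbdeg : b.natDegree = (EuclideanDomain.gcd a b).natDegree + b'.natDegree := by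
      conv_lhs => rw [hb']
      exact Polynomial.natDegree_mul hd0 hb'0
    have hadeg : a.natDegree = (EuclideanDomain.gcd a b).natDegree + a'.natDegree := by
      conv_lhs => rw [ha']
      exact Polynomial.natDegree_mul hd0 ha'0
    set cc : Fin (a.natDegree + b.natDegree) → F := fun i0 =>
      if _ : (i0 : ℕ) < b.natDegree then b'.coeff (b.natDegree - 1 - (i0 : ℕ))
      else (-a').coeff (a.natDegree - 1 - ((i0 : ℕ) - b.natDegree)) with hcc
    have hccl : ∀ i : Fin b.natDegree,
        cc ⟨(i : ℕ), by have := i.isLt; omega⟩ = b'.coeff (b.natDegree - 1 - (i : ℕ)) := by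
      intro i
      simp only [hcc]
      exact dif_pos i.isLt
    have hccr : ∀ i : Fin a.natDegree,
        cc ⟨b.natDegree + (i : ℕ), by have := i.isLt; omega⟩
          = (-a').coeff (a.natDegree - 1 - (i : ℕ)) := by
      intro i
      simp only [hcc]
      rw [dif_neg (by omega)]
      congr 2
      omega
    refine ⟨cc, ?_, ?_⟩
    · intro hzero
      have hev := congrFun hzero ⟨b.natDegree - 1 - b'.natDegree, by omega⟩
      simp only [Pi.zero_apply, hcc] at hev
      rw [dif_pos (show b.natDegree - 1 - b'.natDegree < b.natDegree from by omega)] at hev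
      rw [show b.natDegree - 1 - (b.natDegree - 1 - b'.natDegree) = b'.natDegree
          from by omega] at hev
      exact hb'0 (Polynomial.leadingCoeff_eq_zero.mp hev)
    · funext j
      simp only [Pi.zero_apply]
      rw [vecMul_syl]
      have hsum1 : (∑ i : Fin b.natDegree,
          C (cc ⟨(i : ℕ), by have := i.isLt; omega⟩) * X ^ (b.natDegree - 1 - (i : ℕ))) = b' := by
        rw [Finset.sum_congr rfl fun i _ => by rw [hccl i]]
        exact recon b' b.natDegree (by omega)
      have hsum2 : (∑ i : Fin a.natDegree,
          C (cc ⟨b.natDegree + (i : ℕ), by have := i.isLt; omega⟩)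
            * X ^ (a.natDegree - 1 - (i : ℕ))) = -a' := by
        rw [Finset.sum_congr rfl fun i _ => by rw [hccr i]]
        refine recon (-a') a.natDegree ?_
        rw [Polynomial.natDegree_neg]
        omega
      rw [hsum1, hsum2]
      have hz : b' * a + -a' * b = 0 := by linear_combination b' * ha' + (-a') * hb'
      rw [hz, Polynomial.coeff_zero]

lemma resultant_map {S : Type*} [CommRing S] (φ : R →+* S) {a b : R[X]}
    (hA : (a.map φ).natDegree = a.natDegree) (hB : (b.map φ).natDegree = b.natDegree) :
    φ (_root_.resultant a b) = _root_.resultant (a.map φ) (b.map φ) := by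
  rw [resultant_eq_det, resultant_eq_det, RingHom.map_det]
  have hnd : a.natDegree + b.natDegree = (a.map φ).natDegree + (b.map φ).natDegree := by
    rw [hA, hB]
  rw [← Matrix.det_submatrix_equiv_self (finCongr hnd) (syl (a.map φ) (b.map φ))]
  have hdet2 : ∀ P Q : Matrix (Fin (a.natDegree + b.natDegree))
      (Fin (a.natDegree + b.natDegree)) S, P = Q → P.det = Q.det := fun P Q h => by rw [h]
  apply hdet2
  refine Matrix.ext fun i j => ?_
  simp only [RingHom.mapMatrix_apply, Matrix.map_apply, Matrix.submatrix_apply, syl,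
    Matrix.of_apply]
  rw [show ((finCongr hnd i : Fin _) : ℕ) = (i : ℕ) from rfl,
    show ((finCongr hnd j : Fin _) : ℕ) = (j : ℕ) from rfl, hA, hB]
  split_ifs <;> simp [Polynomial.coeff_map]

lemma natDegree_map_sub_C {S : Type*} [CommRing S] [Nontrivial S] {f : R[X]} (hf : f.Monic)
    (ρ : R →+* S) (t : S) : (f.map ρ - C t).natDegree = f.natDegree := by
  rcases Nat.eq_zero_or_pos f.natDegree with h0 | h0
  · have h1 : f = 1 := (Polynomial.Monic.natDegree_eq_zero hf).mp h0
    rw [h1, Polynomial.map_one]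
    rw [show (1 : S[X]) - C t = C (1 - t) from by rw [map_sub, map_one]]
    simp [Polynomial.natDegree_C]
  · rw [Polynomial.natDegree_sub_eq_left_of_natDegree_lt, hf.natDegree_map]
    rw [hf.natDegree_map, Polynomial.natDegree_C]
    omega

/-- The key structural fact: `(-1)^(deg g) * Res(g, f - T)` is the characteristic polynomial
of an explicit matrix, hence monic of degree `deg g`. -/
lemma resultant_eq_charpoly {k : Type*} [Field k] (f g : k[X]) (hf : f.Monic) (hg : g.Monic)
    (hm : 0 < g.natDegree) :
    ∃ Nm : Matrix (Fin g.natDegree) (Fin g.natDegree) k,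
      (-1 : k[X]) ^ g.natDegree * _root_.resultant (g.map C) (f.map C - C X) = Nm.charpoly := by
  classical
  have hA : (g.map (C : k →+* k[X])).natDegree = g.natDegree := hg.natDegree_map _
  have hB : (f.map (C : k →+* k[X]) - C X).natDegree = f.natDegree :=
    natDegree_map_sub_C hf _ _
  set m := g.natDegree with hm'
  set n := f.natDegree with hn'
  let U : Matrix (Fin n) (Fin n) k := Matrix.of fun i j =>
    if (i : ℕ) ≤ (j : ℕ) ∧ (j : ℕ) ≤ (i : ℕ) + m then g.coeff (m + (i : ℕ) - (j : ℕ)) else 0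
  let V : Matrix (Fin n) (Fin m) k := Matrix.of fun i j =>
    if (i : ℕ) ≤ n + (j : ℕ) ∧ n + (j : ℕ) ≤ (i : ℕ) + m then
      g.coeff (m + (i : ℕ) - (n + (j : ℕ))) else 0
  let W : Matrix (Fin m) (Fin n) k := Matrix.of fun i j =>
    if (i : ℕ) ≤ (j : ℕ) ∧ (j : ℕ) ≤ (i : ℕ) + n then f.coeff (n + (i : ℕ) - (j : ℕ)) else 0
  let Z : Matrix (Fin m) (Fin m) k := Matrix.of fun i j =>
    if (i : ℕ) ≤ n + (j : ℕ) ∧ n + (j : ℕ) ≤ (i : ℕ) + n then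
      f.coeff (n + (i : ℕ) - (n + (j : ℕ))) else 0
  have hUtri : ∀ i j : Fin n, (j : ℕ) < (i : ℕ) → U i j = 0 := by
    intro i j hij
    simp only [U, Matrix.of_apply]
    rw [if_neg (by omega)]
  have hUdiag : ∀ i : Fin n, U i i = 1 := by
    intro i
    simp only [U, Matrix.of_apply]
    rw [if_pos (by omega), show m + (i : ℕ) - (i : ℕ) = m from by omega]
    exact hg.coeff_natDegree
  have hUdet : U.det = 1 := by
    rw [Matrix.det_of_upperTriangular (fun i j hij => hUtri i j hij)]
    simp [hUdiag]
  haveI : Invertible U := U.invertibleOfIsUnitDet (by rw [hUdet]; exact isUnit_one)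
  haveI : Invertible ((C : k →+* k[X]).mapMatrix U) :=
    Invertible.map ((C : k →+* k[X]).mapMatrix :
      Matrix (Fin n) (Fin n) k →+* Matrix (Fin n) (Fin n) k[X]) U
  let e : Fin n ⊕ Fin m ≃ Fin ((g.map (C : k →+* k[X])).natDegree
      + (f.map (C : k →+* k[X]) - C X).natDegree) :=
    finSumFinEquiv.trans (finCongr (by rw [hA, hB]; omega))
  have e_inl : ∀ i : Fin n, ((e (Sum.inl i)) : ℕ) = (i : ℕ) := by intro i; simp [e]
  have e_inr : ∀ i : Fin m, ((e (Sum.inr i)) : ℕ) = n + (i : ℕ) := by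
    intro i; simp [e]
  have hcoeffA : ∀ r : ℕ, (g.map (C : k →+* k[X])).coeff r = C (g.coeff r) := fun r =>
    Polynomial.coeff_map _ _
  have hcoeffB : ∀ r : ℕ, (f.map (C : k →+* k[X]) - C X).coeff r
      = C (f.coeff r) - (if r = 0 then X else 0) := by
    intro r
    rw [Polynomial.coeff_sub, Polynomial.coeff_map, Polynomial.coeff_C]
  have hsub : (syl (g.map (C : k →+* k[X])) (f.map (C : k →+* k[X]) - C X)).submatrix e e
      = Matrix.fromBlocks ((C : k →+* k[X]).mapMatrix U) (V.map (C : k →+* k[X]))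
          (W.map (C : k →+* k[X]))
          ((C : k →+* k[X]).mapMatrix Z - (X : k[X]) • 1) := by
    refine Matrix.ext fun x y => ?_
    rcases x with i | i <;> rcases y with j | j
    · rw [Matrix.submatrix_apply, Matrix.fromBlocks_apply₁₁]
      simp only [syl, Matrix.of_apply]
      rw [e_inl i, e_inl j, hB, hA, if_pos i.isLt]
      simp only [RingHom.mapMatrix_apply, Matrix.map_apply, Matrix.of_apply, U]
      rw [apply_ite C, map_zero]
      simp only [hcoeffA]
    · rw [Matrix.submatrix_apply, Matrix.fromBlocks_apply₁₂]
      simp only [syl, Matrix.of_apply]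
      rw [e_inl i, e_inr j, hB, hA, if_pos i.isLt]
      simp only [Matrix.map_apply, Matrix.of_apply, V]
      rw [apply_ite C, map_zero]
      simp only [hcoeffA]
    · rw [Matrix.submatrix_apply, Matrix.fromBlocks_apply₂₁]
      simp only [syl, Matrix.of_apply]
      rw [e_inr i, e_inl j, hB, if_neg (by omega)]
      rw [show n + (i : ℕ) - n = (i : ℕ) from by omega]
      simp only [Matrix.map_apply, Matrix.of_apply, W]
      rw [apply_ite C, map_zero]
      simp only [hcoeffB]
      have hj := j.isLt
      split_ifs with h1 h2
      · exfalso; omega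
      · rw [sub_zero]
      · rfl
    · rw [Matrix.submatrix_apply, Matrix.fromBlocks_apply₂₂]
      simp only [syl, Matrix.of_apply]
      rw [e_inr i, e_inr j, hB, if_neg (by omega)]
      rw [show n + (i : ℕ) - n = (i : ℕ) from by omega]
      rw [Matrix.sub_apply, Matrix.smul_apply, Matrix.one_apply]
      simp only [RingHom.mapMatrix_apply, Matrix.map_apply, Matrix.of_apply, Z]
      rw [apply_ite C, map_zero]
      simp only [hcoeffB]
      by_cases hij : i = j
      · subst hij
        rw [if_pos (by omega), if_pos (by omega), if_pos (by omega)]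
        rw [show n + (i : ℕ) - (n + (i : ℕ)) = 0 from by omega]
        simp
      · have hij' : (i : ℕ) ≠ (j : ℕ) := fun h => hij (Fin.ext h)
        rw [if_neg hij, smul_zero, sub_zero]
        split_ifs with h1 h2
        · exfalso; omega
        · rw [sub_zero]
        · rfl
  have hdet : _root_.resultant (g.map (C : k →+* k[X])) (f.map (C : k →+* k[X]) - C X)
      = (-1 : k[X]) ^ m * (Z - W * ⅟U * V).charpoly := by
    rw [resultant_eq_det, ← Matrix.det_submatrix_equiv_self e, hsub,
      Matrix.det_fromBlocks₁₁]
    have h1 : ((C : k →+* k[X]).mapMatrix U).det = 1 := by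
      rw [← RingHom.map_det, hUdet, map_one]
    rw [h1, one_mul]
    have h2 : ((C : k →+* k[X]).mapMatrix Z - (X : k[X]) • 1)
        - W.map (C : k →+* k[X]) * ⅟((C : k →+* k[X]).mapMatrix U)
          * V.map (C : k →+* k[X])
        = (C : k →+* k[X]).mapMatrix (Z - W * ⅟U * V) - (X : k[X]) • 1 := by
      rw [← map_invOf ((C : k →+* k[X]).mapMatrix :
        Matrix (Fin n) (Fin n) k →+* Matrix (Fin n) (Fin n) k[X]) U]
      simp only [RingHom.mapMatrix_apply]
      rw [← Matrix.map_mul, ← Matrix.map_mul, sub_right_comm,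
        ← Matrix.map_sub (C : k →+* k[X]) (fun x y => map_sub C x y)]
    rw [h2]
    have h3 : (C : k →+* k[X]).mapMatrix (Z - W * ⅟U * V) - (X : k[X]) • 1
        = -(Matrix.charmatrix (Z - W * ⅟U * V)) := by
      rw [Matrix.charmatrix, neg_sub]
      congr 1
      rw [Matrix.smul_one_eq_diagonal, Matrix.scalar_apply]
    rw [h3, Matrix.det_neg, Fintype.card_fin]
    rfl
  refine ⟨Z - W * ⅟U * V, ?_⟩
  rw [hdet, ← mul_assoc, ← pow_add]
  rw [Even.neg_one_pow ⟨m, rfl⟩, one_mul]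

end ResAux

/-- If `f, g ∈ k[Y]` are monic and `g` is irreducible, then
`h = (-1)^(deg g) · Res_Y(g, f - T) ∈ k[T]` is a power of an irreducible polynomial. -/
theorem resultant_power_of_irreducible {k : Type*} [Field k]
    (f g : k[X]) (hf : f.Monic) (hg : g.Monic) (hgirr : Irreducible g) :
    ∃ (p : k[X]) (n : ℕ), Irreducible p ∧ 0 < n ∧
      (-1 : k[X]) ^ g.natDegree * _root_.resultant (g.map C) (f.map C - C X) = p ^ n := by
  classical
  have hm : 0 < g.natDegree := by
    rcases Nat.eq_zero_or_pos g.natDegree with h0 | h0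
    · exfalso
      apply hgirr.not_isUnit
      rw [hg.natDegree_eq_zero.mp h0]
      exact isUnit_one
    · exact h0
  obtain ⟨Nm, hNm⟩ := ResAux.resultant_eq_charpoly f g hf hg hm
  set h : k[X] := (-1 : k[X]) ^ g.natDegree * _root_.resultant (g.map C) (f.map C - C X) with hh
  have hmonic : h.Monic := by rw [hNm]; exact Nm.charpoly_monic
  have hdeg : h.natDegree = g.natDegree := by
    rw [hNm, Nm.charpoly_natDegree_eq_dim, Fintype.card_fin]
  haveI : Fact (Irreducible g) := ⟨hgirr⟩
  have hint : IsIntegral k (AdjoinRoot.mk g f) := by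
    haveI : Module.Finite k (AdjoinRoot g) := PowerBasis.finite (AdjoinRoot.powerBasis hg.ne_zero)
    exact IsIntegral.of_finite k _
  have hpirr : Irreducible (minpoly k (AdjoinRoot.mk g f)) := minpoly.irreducible hint
  have hpmon : (minpoly k (AdjoinRoot.mk g f)).Monic := minpoly.monic hint
  set L := AlgebraicClosure k with hL
  have hroot : ∀ t : L, Polynomial.aeval t h = 0 →
      minpoly k t = minpoly k (AdjoinRoot.mk g f) := by
    intro t ht
    set ι : k →+* L := algebraMap k L with hι
    set φ : k[X] →+* L := (Polynomial.aeval t : k[X] →ₐ[k] L).toRingHom with hφ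
    have hφC : ∀ x : k, φ (C x) = ι x := fun x => by simp [hφ, hι]
    have hφcomp : φ.comp (C : k →+* k[X]) = ι := RingHom.ext hφC
    have hφX : φ X = t := by simp [hφ]
    have hAφ : (g.map (C : k →+* k[X])).map φ = g.map ι := by
      rw [Polynomial.map_map, hφcomp]
    have hBφ : (f.map (C : k →+* k[X]) - C X).map φ = f.map ι - C t := by
      rw [Polynomial.map_sub, Polynomial.map_map, hφcomp, Polynomial.map_C, hφX]
    have hA1 : ((g.map (C : k →+* k[X])).map φ).natDegree
        = (g.map (C : k →+* k[X])).natDegree := by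
      rw [hAφ, hg.natDegree_map, hg.natDegree_map]
    have hB1 : ((f.map (C : k →+* k[X]) - C X).map φ).natDegree
        = (f.map (C : k →+* k[X]) - C X).natDegree := by
      rw [hBφ, ResAux.natDegree_map_sub_C hf ι t,
        ResAux.natDegree_map_sub_C hf (C : k →+* k[X]) X]
    have hres : _root_.resultant (g.map ι) (f.map ι - C t) = 0 := by
      have h1 : φ (_root_.resultant (g.map (C : k →+* k[X])) (f.map (C : k →+* k[X]) - C X))
          = _root_.resultant (g.map ι) (f.map ι - C t) := by
        rw [ResAux.resultant_map φ hA1 hB1, hAφ, hBφ]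
      have h2 : φ h = 0 := ht
      rw [hh, map_mul, map_pow, map_neg, map_one, h1] at h2
      rcases mul_eq_zero.mp h2 with h3 | h3
      · exact absurd h3 (pow_ne_zero _ (neg_ne_zero.mpr one_ne_zero))
      · exact h3
    have hgm : (g.map ι).Monic := hg.map ι
    obtain ⟨α, hα1, hα2⟩ : ∃ α : L, (g.map ι).eval α = 0 ∧ (f.map ι).eval α = t := by
      by_cases hbL : f.map ι - C t = 0
      · have hft : f.map ι = C t := by linear_combination hbL
        have hdeg' : (g.map ι).degree ≠ 0 := by
          rw [Polynomial.degree_eq_natDegree hgm.ne_zero, hg.natDegree_map]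
          exact_mod_cast hm.ne'
        obtain ⟨α, hα⟩ := IsAlgClosed.exists_root _ hdeg'
        exact ⟨α, hα, by rw [hft, Polynomial.eval_C]⟩
      · have hncop : ¬ IsCoprime (g.map ι) (f.map ι - C t) :=
          (ResAux.resultant_eq_zero_iff hgm hbL).mp hres
        have hdu : ¬ IsUnit (EuclideanDomain.gcd (g.map ι) (f.map ι - C t)) := fun hu =>
          hncop (EuclideanDomain.gcd_isUnit_iff.mp hu)
        have hddvd1 := EuclideanDomain.gcd_dvd_left (g.map ι) (f.map ι - C t)
        have hddvd2 := EuclideanDomain.gcd_dvd_right (g.map ι) (f.map ι - C t)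
        have hddeg : (EuclideanDomain.gcd (g.map ι) (f.map ι - C t)).degree ≠ 0 := fun h0 =>
          hdu (Polynomial.isUnit_iff_degree_eq_zero.mpr h0)
        obtain ⟨α, hα⟩ := IsAlgClosed.exists_root _ hddeg
        refine ⟨α, hα.dvd hddvd1, ?_⟩
        have h5 : (f.map ι - C t).eval α = 0 := hα.dvd hddvd2
        rw [Polynomial.eval_sub, Polynomial.eval_C] at h5
        exact sub_eq_zero.mp h5
    have hgα : Polynomial.aeval α g = 0 := by
      rw [Polynomial.aeval_def, ← Polynomial.eval_map]; exact hα1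
    have hinj : Function.Injective (AdjoinRoot.liftAlgHom g (Algebra.ofId k L) α hgα) :=
      (AdjoinRoot.liftAlgHom g (Algebra.ofId k L) α hgα).toRingHom.injective
    have hψβ : AdjoinRoot.liftAlgHom g (Algebra.ofId k L) α hgα (AdjoinRoot.mk g f) = t := by
      change Polynomial.aeval α f = t
      rw [Polynomial.aeval_def, ← Polynomial.eval_map]
      exact hα2
    calc minpoly k t = minpoly k (AdjoinRoot.liftAlgHom g (Algebra.ofId k L) α hgα (AdjoinRoot.mk g f)) := by
          rw [hψβ]
      _ = minpoly k (AdjoinRoot.mk g f) := minpoly.algHom_eq _ hinj _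
  have hne : h ≠ 0 := hmonic.ne_zero
  obtain ⟨N, r, hndvd, hEq⟩ := WfDvdMonoid.max_power_factor hne hpirr
  have hrunit : IsUnit r := by
    by_contra hru
    have hr0 : r ≠ 0 := fun h0 => hne (by rw [hEq, h0, mul_zero])
    obtain ⟨q, hqirr, hqdvd⟩ := WfDvdMonoid.exists_irreducible_factor hru hr0
    have hq0 : q ≠ 0 := hqirr.ne_zero
    have hlc0 : q.leadingCoeff ≠ 0 := Polynomial.leadingCoeff_ne_zero.mpr hq0
    set q' := q * C (q.leadingCoeff)⁻¹ with hq'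
    have hq'mon : q'.Monic := Polynomial.monic_mul_leadingCoeff_inv hq0
    have hqq' : q = q' * C q.leadingCoeff := by
      rw [hq', mul_assoc, ← Polynomial.C_mul, inv_mul_cancel₀ hlc0, Polynomial.C_1, mul_one]
    have hq'dvdh : q' ∣ h := by
      have h1 : q' ∣ q := ⟨C q.leadingCoeff, hqq'⟩
      have h2 : r ∣ h := ⟨minpoly k (AdjoinRoot.mk g f) ^ N, by rw [hEq]; ring⟩
      exact h1.trans (hqdvd.trans h2)
    have hCu : IsUnit (C (q.leadingCoeff)⁻¹) :=
      Polynomial.isUnit_C.mpr (Ne.isUnit (inv_ne_zero hlc0))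
    have hq'irr : Irreducible q' := by
      rw [hq']
      exact Associated.irreducible ⟨hCu.unit, by rw [IsUnit.unit_spec]⟩ hqirr
    have hq'deg : 0 < q'.natDegree := by
      rcases Nat.eq_zero_or_pos q'.natDegree with h0 | h0
      · exfalso
        have h1 : q' = 1 := hq'mon.natDegree_eq_zero.mp h0
        rw [h1, one_mul] at hqq'
        apply hqirr.not_isUnit
        rw [hqq']
        exact Polynomial.isUnit_C.mpr (Ne.isUnit hlc0)
      · exact h0
    have hq'map : (q'.map (algebraMap k L)).degree ≠ 0 := by
      rw [Polynomial.degree_eq_natDegree (hq'mon.map _).ne_zero, hq'mon.natDegree_map]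
      exact_mod_cast hq'deg.ne'
    obtain ⟨t, htq⟩ := IsAlgClosed.exists_root _ hq'map
    have htq' : Polynomial.aeval t q' = 0 := by
      rw [Polynomial.aeval_def, ← Polynomial.eval_map]; exact htq
    have hth : Polynomial.aeval t h = 0 := by
      obtain ⟨s, hs⟩ := hq'dvdh
      rw [hs, map_mul, htq', zero_mul]
    have hpq' : minpoly k (AdjoinRoot.mk g f) ∣ q' := (hroot t hth) ▸ minpoly.dvd k t htq'
    obtain ⟨w, hw⟩ := hpq'
    have hwunit : IsUnit w := by
      rcases (hw ▸ hq'irr).isUnit_or_isUnit rfl with h1 | h1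
      · exact absurd h1 hpirr.not_isUnit
      · exact h1
    apply hndvd
    refine (Dvd.intro w hw.symm).trans (Dvd.dvd.trans ⟨C q.leadingCoeff, hqq'⟩ hqdvd)
  have hN : 0 < N := by
    rcases Nat.eq_zero_or_pos N with h0 | h0
    · exfalso
      rw [h0, pow_zero, one_mul] at hEq
      have h1 : h.natDegree = 0 := by
        rw [hEq]; exact Polynomial.natDegree_eq_zero_of_isUnit hrunit
      omega
    · exact h0
  have hr1 : r = 1 := by
    obtain ⟨cu, hcu, hcuC⟩ := Polynomial.isUnit_iff.mp hrunit
    have h1 : (minpoly k (AdjoinRoot.mk g f) ^ N * r).leadingCoeff = h.leadingCoeff := by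
      rw [← hEq]
    rw [Polynomial.leadingCoeff_mul, (hpmon.pow N).leadingCoeff, one_mul,
      hmonic.leadingCoeff, ← hcuC, Polynomial.leadingCoeff_C] at h1
    rw [← hcuC, h1, Polynomial.C_1]
  exact ⟨minpoly k (AdjoinRoot.mk g f), N, hpirr, hN, by rw [hEq, hr1, mul_one]⟩
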